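/- Define μ₁ as the infimum of ∫₀^{π/2} |ψ'(θ)|² ω(θ) dθ over ψ ∈ H¹_loc(0, π/2) with ∫₀^{π/2} ψ²ω dθ = 1 and ∫₀^{π/2} ψω dθ = 0, where ω(θ) = cos^{m-1}(θ) sin^{n-1}(θ). Then μ₁ ≤ 2N with N = m + n, witnessed by a suitable normalization of ψ(θ) = (m-n)/N - cos(2θ). -/

import Mathlib

open Real Set intervalIntegral
open MeasureTheory

private lemma contg (k l : ℕ) : Continuous (fun θ : ℝ => Real.cos θ ^ k * Real.sin θ ^ l) :=
  (Real.continuous_cos.pow k).mul (Real.continuous_sin.pow l)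

private lemma intg (k l : ℕ) :
    IntervalIntegrable (fun θ : ℝ => Real.cos θ ^ k * Real.sin θ ^ l) volume 0 (π/2) :=
  (contg k l).intervalIntegrable 0 (π/2)

private lemma ftc (p q : ℕ) :
    (q + 1 : ℝ) * (∫ θ in (0:ℝ)..(π/2), Real.cos θ ^ (p+2) * Real.sin θ ^ q)
      = (p + 1 : ℝ) * (∫ θ in (0:ℝ)..(π/2), Real.cos θ ^ p * Real.sin θ ^ (q+2)) := by
  have hderiv : ∀ θ ∈ uIcc (0:ℝ) (π/2),
      HasDerivAt (fun θ => Real.cos θ ^ (p+1) * Real.sin θ ^ (q+1))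
      ((q+1:ℝ) * (Real.cos θ ^ (p+2) * Real.sin θ ^ q)
        - (p+1) * (Real.cos θ ^ p * Real.sin θ ^ (q+2))) θ := by
    intro θ _
    have h1 : HasDerivAt (fun θ : ℝ => Real.cos θ ^ (p+1))
        ((p+1 : ℝ) * Real.cos θ ^ p * (-Real.sin θ)) θ := by
      simpa using (Real.hasDerivAt_cos θ).fun_pow (p+1)
    have h2 : HasDerivAt (fun θ : ℝ => Real.sin θ ^ (q+1))
        ((q+1 : ℝ) * Real.sin θ ^ q * Real.cos θ) θ := by
      simpa using (Real.hasDerivAt_sin θ).fun_pow (q+1)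
    have := h1.mul h2
    exact this.congr_deriv (by ring)
  have hint : IntervalIntegrable (fun θ => (q+1:ℝ) * (Real.cos θ ^ (p+2) * Real.sin θ ^ q)
      - (p+1) * (Real.cos θ ^ p * Real.sin θ ^ (q+2))) volume 0 (π/2) :=
    ((intg _ _).const_mul _).sub ((intg _ _).const_mul _)
  have h0 := intervalIntegral.integral_eq_sub_of_hasDerivAt hderiv hint
  rw [intervalIntegral.integral_sub ((intg _ _).const_mul _) ((intg _ _).const_mul _),
      intervalIntegral.integral_const_mul, intervalIntegral.integral_const_mul] at h0
  simp at h0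
  linarith

private lemma integral_comb (k1 k2 k3 k4 k5 k6 : ℝ) (a b : ℕ) :
    (∫ θ in (0:ℝ)..(π/2), (k1*(Real.cos θ^a*Real.sin θ^b) + k2*(Real.cos θ^(a+2)*Real.sin θ^b)
      + k3*(Real.cos θ^a*Real.sin θ^(b+2)) + k4*(Real.cos θ^(a+4)*Real.sin θ^b)
      + k5*(Real.cos θ^(a+2)*Real.sin θ^(b+2)) + k6*(Real.cos θ^a*Real.sin θ^(b+4))))
    = k1*(∫ θ in (0:ℝ)..(π/2), Real.cos θ^a*Real.sin θ^b)
      + k2*(∫ θ in (0:ℝ)..(π/2), Real.cos θ^(a+2)*Real.sin θ^b)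
      + k3*(∫ θ in (0:ℝ)..(π/2), Real.cos θ^a*Real.sin θ^(b+2))
      + k4*(∫ θ in (0:ℝ)..(π/2), Real.cos θ^(a+4)*Real.sin θ^b)
      + k5*(∫ θ in (0:ℝ)..(π/2), Real.cos θ^(a+2)*Real.sin θ^(b+2))
      + k6*(∫ θ in (0:ℝ)..(π/2), Real.cos θ^a*Real.sin θ^(b+4)) := by
  rw [intervalIntegral.integral_add (((((intg _ _).const_mul _).add ((intg _ _).const_mul _)).add
        ((intg _ _).const_mul _)).add (((intg _ _).const_mul _)) |>.add ((intg _ _).const_mul _))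
      ((intg _ _).const_mul _),
    intervalIntegral.integral_add ((((intg _ _).const_mul _).add ((intg _ _).const_mul _)).add
        ((intg _ _).const_mul _) |>.add ((intg _ _).const_mul _)) ((intg _ _).const_mul _),
    intervalIntegral.integral_add (((intg _ _).const_mul _).add ((intg _ _).const_mul _) |>.add
        ((intg _ _).const_mul _)) ((intg _ _).const_mul _),
    intervalIntegral.integral_add (((intg _ _).const_mul _).add ((intg _ _).const_mul _))
        ((intg _ _).const_mul _),
    intervalIntegral.integral_add ((intg _ _).const_mul _) ((intg _ _).const_mul _)]
  simp only [intervalIntegral.integral_const_mul]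

private lemma key (a b : ℕ) (x0 xa xb xc xd xe c aa : ℝ)
    (hd : 0 < xd)
    (hF1 : ((b:ℝ)+1)*xa = ((a:ℝ)+1)*xb)
    (hF2 : ((b:ℝ)+1)*xc = ((a:ℝ)+3)*xd)
    (hF3 : ((b:ℝ)+3)*xd = ((a:ℝ)+1)*xe)
    (hP1 : x0 = xa + xb) (hP2 : x0 = xc + 2*xd + xe)
    (haa : aa = ((a:ℝ)-b)/((a:ℝ)+b+2))
    (hc2 : c^2 = ((a:ℝ)+b+2)/(8*xd)) :
    ((c^2*aa^2)*x0 + (-(2*c^2*aa))*xa + (2*c^2*aa)*xb + c^2*xc + (-(2*c^2))*xd + c^2*xe = 1)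
    ∧ ((c*aa)*x0 + (-c)*xa + c*xb + 0*xc + 0*xd + 0*xe = 0)
    ∧ ((2*((a:ℝ)+b+2)) = 0*x0+0*xa+0*xb+0*xc+(16*c^2)*xd+0*xe) := by
  have hNr : ((a:ℝ)+b+2) ≠ 0 := by positivity
  have ha1 : ((a:ℝ)+1) ≠ 0 := by positivity
  have hb1 : ((b:ℝ)+1) ≠ 0 := by positivity
  have hxd : xd ≠ 0 := hd.ne'
  have exc : xc = ((a:ℝ)+3)*xd/((b:ℝ)+1) := by field_simp; linear_combination hF2
  have exe : xe = ((b:ℝ)+3)*xd/((a:ℝ)+1) := by field_simp; linear_combination -hF3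
  have exa : xa = ((a:ℝ)+1)*x0/((a:ℝ)+b+2) := by
    field_simp; linear_combination hF1 - ((a:ℝ)+1)*hP1
  have exb : xb = ((b:ℝ)+1)*x0/((a:ℝ)+b+2) := by
    field_simp; linear_combination -hF1 - ((b:ℝ)+1)*hP1
  have ex0 : x0 = ((a:ℝ)+b+2)*((a:ℝ)+b+4)*xd/(((a:ℝ)+1)*((b:ℝ)+1)) := by
    field_simp; linear_combination ((a:ℝ)+1)*((b:ℝ)+1)*hP2 + ((a:ℝ)+1)*hF2 - ((b:ℝ)+1)*hF3
  refine ⟨?_, ?_, ?_⟩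
  · rw [hc2, haa, exa, exb, exc, exe, ex0]; field_simp; ring
  · rw [haa, exa, exb]; field_simp; ring
  · rw [hc2]; field_simp; ring
/-- The second eigenvalue `μ₁`, defined as the infimum of `∫₀^{π/2} ψ'² ω` over
normalized functions `ψ` orthogonal to constants with respect to the weight
`ω(θ) = cos^{m-1}θ sin^{n-1}θ`, satisfies `μ₁ ≤ 2N` where `N = m + n`. -/
theorem stmt_15 (m n : ℕ) (hm : 1 ≤ m) (hn : 1 ≤ n) (N : ℕ) (hN : N = m + n)
    (ω : ℝ → ℝ)
    (hω : ∀ θ, ω θ = Real.cos θ ^ (m - 1) * Real.sin θ ^ (n - 1))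
    (μ₁ : ℝ)
    (hμ₁ : μ₁ = sInf {μ : ℝ | ∃ ψ : ℝ → ℝ, ContDiffOn ℝ 1 ψ (Ioo 0 (π / 2)) ∧
      (∫ θ in (0 : ℝ)..(π / 2), ψ θ ^ 2 * ω θ) = 1 ∧
      (∫ θ in (0 : ℝ)..(π / 2), ψ θ * ω θ) = 0 ∧
      μ = ∫ θ in (0 : ℝ)..(π / 2), (deriv ψ θ) ^ 2 * ω θ}) :
    μ₁ ≤ 2 * N := by
  subst hN hμ₁
  obtain ⟨a, rfl⟩ : ∃ a, m = a + 1 := ⟨m - 1, by omega⟩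
  obtain ⟨b, rfl⟩ : ∃ b, n = b + 1 := ⟨n - 1, by omega⟩
  have hω' : ∀ θ, ω θ = Real.cos θ ^ a * Real.sin θ ^ b := by
    simpa using hω
  -- the six basic integrals
  set x0 : ℝ := ∫ θ in (0:ℝ)..(π/2), Real.cos θ^a*Real.sin θ^b with hx0
  set xa : ℝ := ∫ θ in (0:ℝ)..(π/2), Real.cos θ^(a+2)*Real.sin θ^b with hxa
  set xb : ℝ := ∫ θ in (0:ℝ)..(π/2), Real.cos θ^a*Real.sin θ^(b+2) with hxb
  set xc : ℝ := ∫ θ in (0:ℝ)..(π/2), Real.cos θ^(a+4)*Real.sin θ^b with hxc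
  set xd : ℝ := ∫ θ in (0:ℝ)..(π/2), Real.cos θ^(a+2)*Real.sin θ^(b+2) with hxd
  set xe : ℝ := ∫ θ in (0:ℝ)..(π/2), Real.cos θ^a*Real.sin θ^(b+4) with hxe
  have hd : 0 < xd := by
    rw [hxd]
    apply intervalIntegral_pos_of_pos_on (intg _ _) _ (by positivity)
    intro u hu
    have h1 : 0 < Real.cos u := Real.cos_pos_of_mem_Ioo ⟨by linarith [hu.1, pi_pos], hu.2⟩
    have h2 : 0 < Real.sin u := Real.sin_pos_of_pos_of_lt_pi hu.1 (by linarith [hu.2, pi_pos])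
    positivity
  have hF1 : ((b:ℝ)+1)*xa = ((a:ℝ)+1)*xb := by
    have h := ftc a b; rw [hxa, hxb]; linear_combination h
  have hF2 : ((b:ℝ)+1)*xc = ((a:ℝ)+3)*xd := by
    have h := ftc (a+2) b
    rw [show a+2+2 = a+4 from rfl] at h
    rw [hxc, hxd]; push_cast at h ⊢; linear_combination h
  have hF3 : ((b:ℝ)+3)*xd = ((a:ℝ)+1)*xe := by
    have h := ftc a (b+2)
    rw [show b+2+2 = b+4 from rfl] at h
    rw [hxd, hxe]; push_cast at h ⊢; linear_combination h
  have hP1 : x0 = xa + xb := by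
    rw [hx0, hxa, hxb, ← intervalIntegral.integral_add (intg (a+2) b) (intg a (b+2))]
    apply intervalIntegral.integral_congr
    intro θ _
    have h := Real.sin_sq_add_cos_sq θ
    linear_combination (-(Real.cos θ^a * Real.sin θ^b)) * h
  have hP2 : x0 = xc + 2*xd + xe := by
    have h2d : xc + 2*xd + xe
        = ∫ θ in (0:ℝ)..(π/2), (Real.cos θ^(a+4)*Real.sin θ^b
            + 2*(Real.cos θ^(a+2)*Real.sin θ^(b+2)) + Real.cos θ^a*Real.sin θ^(b+4)) := by
      rw [hxc, hxd, hxe,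
        intervalIntegral.integral_add ((intg (a+4) b).add ((intg (a+2) (b+2)).const_mul 2))
          (intg a (b+4)),
        intervalIntegral.integral_add (intg (a+4) b) ((intg (a+2) (b+2)).const_mul 2),
        intervalIntegral.integral_const_mul]
    rw [hx0, h2d]
    apply intervalIntegral.integral_congr
    intro θ _
    have h := Real.sin_sq_add_cos_sq θ
    linear_combination (-(Real.cos θ^a * Real.sin θ^b))
      * (Real.sin θ^2 + Real.cos θ^2 + 1) * h
  -- the test function
  set aa : ℝ := ((a:ℝ)-b)/((a:ℝ)+b+2) with haa
  set c : ℝ := Real.sqrt (((a:ℝ)+b+2)/(8*xd)) with hcdef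
  have hc2 : c^2 = ((a:ℝ)+b+2)/(8*xd) := by
    rw [hcdef]; exact Real.sq_sqrt (by positivity)
  set ψ : ℝ → ℝ := fun θ => c*(aa - Real.cos (2*θ)) with hψ
  obtain ⟨k1, k2, k3⟩ := key a b x0 xa xb xc xd xe c aa hd hF1 hF2 hF3 hP1 hP2 haa hc2
  have hderivψ : ∀ θ : ℝ, deriv ψ θ = c * (2*Real.sin (2*θ)) := by
    intro θ
    have h1 : HasDerivAt (fun θ:ℝ => 2*θ) 2 θ := by
      simpa using (hasDerivAt_id θ).const_mul 2
    have h2 := (Real.hasDerivAt_cos (2*θ)).comp θ h1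
    have h3 := (h2.const_sub aa).const_mul c
    have h4 : HasDerivAt ψ (c * (2*Real.sin (2*θ))) θ := by
      rw [hψ]; exact h3.congr_deriv (by ring)
    exact h4.deriv
  have hCD : ContDiffOn ℝ 1 ψ (Ioo 0 (π/2)) :=
    ((contDiff_const.mul (contDiff_const.sub
      (Real.contDiff_cos.comp (contDiff_const.mul contDiff_id)))).contDiffOn)
  have hA : (∫ θ in (0:ℝ)..(π/2), ψ θ^2 * ω θ) = 1 := by
    rw [show (∫ θ in (0:ℝ)..(π/2), ψ θ^2 * ω θ)
        = ∫ θ in (0:ℝ)..(π/2), ((c^2*aa^2)*(Real.cos θ^a*Real.sin θ^b)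
          + (-(2*c^2*aa))*(Real.cos θ^(a+2)*Real.sin θ^b)
          + (2*c^2*aa)*(Real.cos θ^a*Real.sin θ^(b+2))
          + (c^2)*(Real.cos θ^(a+4)*Real.sin θ^b)
          + (-(2*c^2))*(Real.cos θ^(a+2)*Real.sin θ^(b+2))
          + (c^2)*(Real.cos θ^a*Real.sin θ^(b+4))) from
      intervalIntegral.integral_congr (fun θ _ => by
        simp only [hψ, hω']
        rw [Real.cos_two_mul']
        ring),
      integral_comb]
    exact k1
  have hB : (∫ θ in (0:ℝ)..(π/2), ψ θ * ω θ) = 0 := by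
    rw [show (∫ θ in (0:ℝ)..(π/2), ψ θ * ω θ)
        = ∫ θ in (0:ℝ)..(π/2), ((c*aa)*(Real.cos θ^a*Real.sin θ^b)
          + (-c)*(Real.cos θ^(a+2)*Real.sin θ^b)
          + (c)*(Real.cos θ^a*Real.sin θ^(b+2))
          + (0:ℝ)*(Real.cos θ^(a+4)*Real.sin θ^b)
          + (0:ℝ)*(Real.cos θ^(a+2)*Real.sin θ^(b+2))
          + (0:ℝ)*(Real.cos θ^a*Real.sin θ^(b+4))) from
      intervalIntegral.integral_congr (fun θ _ => by
        simp only [hψ, hω']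
        rw [Real.cos_two_mul']
        ring),
      integral_comb]
    exact k2
  have hC : (2*((a:ℝ)+1+(b+1)) : ℝ) = ∫ θ in (0:ℝ)..(π/2), (deriv ψ θ)^2 * ω θ := by
    rw [show (∫ θ in (0:ℝ)..(π/2), (deriv ψ θ)^2 * ω θ)
        = ∫ θ in (0:ℝ)..(π/2), ((0:ℝ)*(Real.cos θ^a*Real.sin θ^b)
          + (0:ℝ)*(Real.cos θ^(a+2)*Real.sin θ^b)
          + (0:ℝ)*(Real.cos θ^a*Real.sin θ^(b+2))
          + (0:ℝ)*(Real.cos θ^(a+4)*Real.sin θ^b)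
          + (16*c^2)*(Real.cos θ^(a+2)*Real.sin θ^(b+2))
          + (0:ℝ)*(Real.cos θ^a*Real.sin θ^(b+4))) from
      intervalIntegral.integral_congr (fun θ _ => by
        rw [hderivψ θ, hω', Real.sin_two_mul]
        ring),
      integral_comb]
    rw [← k3]; ring
  have hbdd : BddBelow {μ : ℝ | ∃ ψ : ℝ → ℝ, ContDiffOn ℝ 1 ψ (Ioo 0 (π / 2)) ∧
      (∫ θ in (0 : ℝ)..(π / 2), ψ θ ^ 2 * ω θ) = 1 ∧
      (∫ θ in (0 : ℝ)..(π / 2), ψ θ * ω θ) = 0 ∧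
      μ = ∫ θ in (0 : ℝ)..(π / 2), (deriv ψ θ) ^ 2 * ω θ} := by
    refine ⟨0, ?_⟩
    rintro μ ⟨φ, -, -, -, rfl⟩
    apply intervalIntegral.integral_nonneg (by positivity)
    intro u hu
    have h1 : 0 ≤ Real.cos u :=
      Real.cos_nonneg_of_mem_Icc ⟨by linarith [hu.1, pi_pos], hu.2⟩
    have h2 : 0 ≤ Real.sin u :=
      Real.sin_nonneg_of_nonneg_of_le_pi hu.1 (by linarith [hu.2, pi_pos])
    rw [hω']
    positivity
  have hmem : (2*((a:ℝ)+1+(b+1)) : ℝ) ∈ {μ : ℝ | ∃ ψ : ℝ → ℝ,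
      ContDiffOn ℝ 1 ψ (Ioo 0 (π / 2)) ∧
      (∫ θ in (0 : ℝ)..(π / 2), ψ θ ^ 2 * ω θ) = 1 ∧
      (∫ θ in (0 : ℝ)..(π / 2), ψ θ * ω θ) = 0 ∧
      μ = ∫ θ in (0 : ℝ)..(π / 2), (deriv ψ θ) ^ 2 * ω θ} :=
    ⟨ψ, hCD, hA, hB, hC⟩
  have := csInf_le hbdd hmem
  calc sInf _ ≤ (2*((a:ℝ)+1+(b+1)) : ℝ) := this
    _ = 2 * ((a+1+(b+1) : ℕ) : ℝ) := by push_cast; ring
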